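/- Let C ⊆ F₄ⁿ be an even linear code of dimension k, and let C^⊥ = {w ∈ F₄ⁿ : Σ_{i=1}^n v_i w_i = 0 for all v ∈ C} be its dual with respect to the standard inner product. Then the number of vectors of even Hamming weight in C^⊥ equals ½(4^{n−k} + (−2)ⁿ). -/
import Mathlib


local notation "F₄" => GaloisField 2 2

open Finset

noncomputable local instance : Fintype F₄ := Fintype.ofFinite _
noncomputable local instance : DecidableEq F₄ := Classical.decEq _

lemma F4_card : Fintype.card F₄ = 4 := by
  have := GaloisField.card 2 2 (by norm_num)
  rw [Nat.card_eq_fintype_card] at this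
  omega

lemma F4_two : (2 : F₄) = 0 := by
  have := CharP.cast_eq_zero F₄ 2
  exact_mod_cast this

lemma F4_pow4 (x : F₄) : x ^ 4 = x := by
  have := FiniteField.pow_card x
  rwa [F4_card] at this

lemma tr_cases (x : F₄) : x + x ^ 2 = 0 ∨ x + x ^ 2 = 1 := by
  have hsq : (x + x ^ 2) ^ 2 = x + x ^ 2 := by
    rw [CharTwo.add_sq]
    linear_combination F4_pow4 x
  have : (x + x ^ 2) * ((x + x ^ 2) - 1) = 0 := by linear_combination hsq
  rcases mul_eq_zero.mp this with h | h
  · exact Or.inl h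
  · exact Or.inr (sub_eq_zero.mp h)

lemma exists_tr_one : ∃ x : F₄, x + x ^ 2 = 1 := by
  have hne : ∃ a : F₄, a ≠ 0 ∧ a ≠ 1 := by
    by_contra h
    push_neg at h
    have hsub : (univ : Finset F₄) ⊆ {0, 1} := by
      intro a _
      by_cases ha : a = 0
      · simp [ha]
      · simp [h a ha]
    have hle := Finset.card_le_card hsub
    rw [Finset.card_univ, F4_card] at hle
    have : ({0, 1} : Finset F₄).card ≤ 2 := Finset.card_insert_le _ _ |>.trans (by simp)
    omega
  obtain ⟨a, ha0, ha1⟩ := hne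
  have hfac : a * ((a - 1) * (a ^ 2 + a + 1)) = 0 := by linear_combination F4_pow4 a
  rcases mul_eq_zero.mp hfac with h | h
  · exact absurd h ha0
  rcases mul_eq_zero.mp h with h | h
  · exact absurd (sub_eq_zero.mp h) ha1
  · exact ⟨a, by linear_combination h - F4_two⟩

noncomputable def χ (x : F₄) : ℤ := if x + x ^ 2 = 0 then 1 else -1

lemma χ_zero : χ 0 = 1 := by simp [χ]

lemma χ_add (a b : F₄) : χ (a + b) = χ a * χ b := by
  have hab : (a + b) + (a + b) ^ 2 = (a + a ^ 2) + (b + b ^ 2) := by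
    rw [CharTwo.add_sq]; ring
  unfold χ
  rcases tr_cases a with ha | ha <;> rcases tr_cases b with hb | hb <;>
    rw [hab, ha, hb] <;> simp [one_ne_zero, CharTwo.add_self_eq_zero]

lemma exists_χ_neg : ∃ x : F₄, χ x = -1 := by
  obtain ⟨x, hx⟩ := exists_tr_one
  exact ⟨x, by simp [χ, hx]⟩

lemma χ_finsum {ι : Type*} (s : Finset ι) (f : ι → F₄) :
    χ (∑ i ∈ s, f i) = ∏ i ∈ s, χ (f i) := by
  induction s using Finset.cons_induction with
  | empty => simp [χ_zero]
  | cons i s hi ih => rw [Finset.sum_cons, Finset.prod_cons, χ_add, ih]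

lemma sum_χ : ∑ b : F₄, χ b = 0 := by
  obtain ⟨x, hx⟩ := exists_χ_neg
  have h : ∑ b : F₄, χ (b + x) = ∑ b : F₄, χ b :=
    Fintype.sum_equiv (Equiv.addRight x) _ _ (fun b => rfl)
  simp_rw [χ_add, hx, mul_neg_one, Finset.sum_neg_distrib] at h
  linarith

lemma sum_χ_mul (a : F₄) : ∑ b : F₄, χ (a * b) = if a = 0 then 4 else 0 := by
  by_cases ha : a = 0
  · simp [ha, χ_zero, Finset.card_univ, F4_card]
  · rw [if_neg ha, ← sum_χ]
    exact Fintype.sum_equiv (Equiv.mulLeft₀ a ha) _ _ (fun b => rfl)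

/-- Hamming weight: the number of nonzero coordinates. -/
noncomputable def wt {n : ℕ} (v : Fin n → F₄) : ℕ := Set.ncard {i | v i ≠ 0}

/-- The dual code with respect to the standard inner product. -/
def dualSet {n : ℕ} (C : Submodule F₄ (Fin n → F₄)) : Set (Fin n → F₄) :=
  {w | ∀ v ∈ C, ∑ i, v i * w i = 0}

noncomputable local instance {n : ℕ} (C : Submodule F₄ (Fin n → F₄)) :
    DecidablePred (· ∈ dualSet C) := Classical.decPred _

lemma sum_χ_inner {n : ℕ} (C : Submodule F₄ (Fin n → F₄)) [Fintype C] (w : Fin n → F₄) :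
    ∑ v : C, χ (∑ i, (v : Fin n → F₄) i * w i)
      = if w ∈ dualSet C then (Fintype.card C : ℤ) else 0 := by
  by_cases hw : w ∈ dualSet C
  · rw [if_pos hw]
    rw [Finset.sum_congr rfl fun v _ => by rw [hw v v.2, χ_zero]]
    simp [Finset.card_univ]
  · rw [if_neg hw]
    obtain ⟨v₀, hv₀C, hv₀⟩ : ∃ v ∈ C, ∑ i, v i * w i ≠ 0 := by
      simpa [dualSet] using hw
    obtain ⟨x, hx⟩ := exists_tr_one
    set c : F₄ := ∑ i, v₀ i * w i with hc
    set v₁ : C := ⟨(x * c⁻¹) • v₀, C.smul_mem _ hv₀C⟩ with hv₁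
    have hinner1 : ∑ i, (v₁ : Fin n → F₄) i * w i = x := by
      simp only [hv₁, Pi.smul_apply, smul_eq_mul, mul_assoc]
      rw [← Finset.mul_sum, ← Finset.mul_sum, ← hc]
      field_simp
    have hχ1 : χ (∑ i, (v₁ : Fin n → F₄) i * w i) = -1 := by
      rw [hinner1]; simp [χ, hx]
    have key : ∑ v : C, χ (∑ i, ((v + v₁ : C) : Fin n → F₄) i * w i)
        = ∑ v : C, χ (∑ i, (v : Fin n → F₄) i * w i) :=
      Fintype.sum_equiv (Equiv.addRight v₁) _ _ (fun v => rfl)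
    have expand : ∀ v : C, χ (∑ i, ((v + v₁ : C) : Fin n → F₄) i * w i)
        = χ (∑ i, (v : Fin n → F₄) i * w i) * (-1) := by
      intro v
      have : (∑ i, ((v + v₁ : C) : Fin n → F₄) i * w i)
          = (∑ i, (v : Fin n → F₄) i * w i) + (∑ i, (v₁ : Fin n → F₄) i * w i) := by
        rw [← Finset.sum_add_distrib]
        exact Finset.sum_congr rfl fun i _ => by
          simp [Submodule.coe_add, add_mul]
      rw [this, χ_add, hχ1]
    simp_rw [expand, mul_neg_one, Finset.sum_neg_distrib] at key
    linarith

lemma key_identity {n : ℕ} (C : Submodule F₄ (Fin n → F₄)) [Fintype C] (g : F₄ → ℤ) :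
    (Fintype.card C : ℤ) * ∑ w ∈ Finset.univ.filter (· ∈ dualSet C), ∏ i, g (w i)
      = ∑ v : C, ∏ i, ∑ b : F₄, g b * χ ((v : Fin n → F₄) i * b) := by
  have step1 : ∀ w : Fin n → F₄,
      (if w ∈ dualSet C then (Fintype.card C : ℤ) * ∏ i, g (w i) else 0)
        = ∑ v : C, ∏ i, g (w i) * χ ((v : Fin n → F₄) i * w i) := by
    intro w
    calc (if w ∈ dualSet C then (Fintype.card C : ℤ) * ∏ i, g (w i) else 0)
        = (if w ∈ dualSet C then (Fintype.card C : ℤ) else 0) * ∏ i, g (w i) := by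
          split_ifs <;> simp
      _ = (∑ v : C, χ (∑ i, (v : Fin n → F₄) i * w i)) * ∏ i, g (w i) := by
          rw [sum_χ_inner]
      _ = ∑ v : C, χ (∑ i, (v : Fin n → F₄) i * w i) * ∏ i, g (w i) := Finset.sum_mul _ _ _
      _ = ∑ v : C, ∏ i, g (w i) * χ ((v : Fin n → F₄) i * w i) := by
          refine Finset.sum_congr rfl fun v _ => ?_
          rw [χ_finsum, ← Finset.prod_mul_distrib]
          exact Finset.prod_congr rfl fun i _ => mul_comm _ _
  rw [Finset.mul_sum, Finset.sum_filter]
  simp_rw [step1]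
  rw [Finset.sum_comm]
  refine Finset.sum_congr rfl fun v _ => ?_
  rw [Finset.prod_univ_sum, Fintype.piFinset_univ]

lemma wt_eq_card {n : ℕ} (w : Fin n → F₄) :
    wt w = (Finset.univ.filter fun i => ¬ w i = 0).card := by
  rw [wt, ← Set.ncard_coe_finset]
  congr 1
  ext i
  simp

lemma prod_sign {n : ℕ} (w : Fin n → F₄) :
    ∏ i, (if w i = 0 then (1:ℤ) else -1) = (-1) ^ wt w := by
  rw [Finset.prod_ite, Finset.prod_const_one, one_mul, Finset.prod_const, wt_eq_card]

lemma inner_sum_sign (a : F₄) :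
    ∑ b : F₄, (if b = 0 then (1:ℤ) else -1) * χ (a * b) = if a = 0 then -2 else 2 := by
  have h : ∀ b : F₄, (if b = 0 then (1:ℤ) else -1) * χ (a * b)
      = (if b = 0 then (2:ℤ) * χ (a * b) else 0) - χ (a * b) := by
    intro b; split_ifs <;> ring
  simp_rw [h]
  rw [Finset.sum_sub_distrib,
    Finset.sum_ite_eq' Finset.univ (0:F₄) (fun b => 2 * χ (a * b)), sum_χ_mul]
  simp only [Finset.mem_univ, if_true, mul_zero, χ_zero, mul_one]
  split_ifs <;> norm_num

lemma prod_four {n : ℕ} (v : Fin n → F₄) :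
    ∏ i, (if v i = 0 then (4:ℤ) else 0) = if v = 0 then 4 ^ n else 0 := by
  by_cases hv : v = 0
  · simp [hv]
  · rw [if_neg hv]
    obtain ⟨i, hi⟩ := Function.ne_iff.mp hv
    rw [Pi.zero_apply] at hi
    exact Finset.prod_eq_zero (Finset.mem_univ i) (by simp [hi])

lemma card_dual_eq {n : ℕ} (C : Submodule F₄ (Fin n → F₄)) [Fintype C] :
    (Fintype.card C : ℤ) * ((Finset.univ.filter (· ∈ dualSet C)).card : ℤ) = 4 ^ n := by
  have h := key_identity C (fun _ => 1)
  simp only [Finset.prod_const_one, mul_one, one_mul, Finset.sum_const, nsmul_eq_mul] at h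
  rw [h]
  have h2 : ∀ v : C, ∏ i, ∑ b : F₄, χ ((v : Fin n → F₄) i * b)
      = if v = (0 : C) then (4:ℤ) ^ n else 0 := by
    intro v
    have : ∀ i, ∑ b : F₄, χ ((v : Fin n → F₄) i * b)
        = if (v : Fin n → F₄) i = 0 then (4:ℤ) else 0 := fun i => sum_χ_mul _
    simp_rw [this, prod_four]
    by_cases hv : v = 0
    · simp [hv]
    · rw [if_neg hv, if_neg (by simpa [Submodule.coe_eq_zero] using hv)]
  simp_rw [h2]
  rw [Finset.sum_ite_eq' Finset.univ (0 : C) (fun _ => (4:ℤ)^n)]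
  simp

lemma sum_sign_dual {n : ℕ} (C : Submodule F₄ (Fin n → F₄)) [Fintype C]
    (heven : ∀ v ∈ C, Even (wt v)) :
    (Fintype.card C : ℤ) * ∑ w ∈ Finset.univ.filter (· ∈ dualSet C), (-1:ℤ) ^ wt w
      = (Fintype.card C : ℤ) * (-2) ^ n := by
  have h := key_identity C (fun b => if b = 0 then (1:ℤ) else -1)
  simp_rw [prod_sign, inner_sum_sign] at h
  rw [h]
  have h2 : ∀ v : C, ∏ i, (if (v : Fin n → F₄) i = 0 then (-2:ℤ) else 2) = (-2) ^ n := by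
    intro v
    have hsplit : ∀ i, (if (v : Fin n → F₄) i = 0 then (-2:ℤ) else 2)
        = (if (v : Fin n → F₄) i = 0 then (1:ℤ) else -1) * (-2) := by
      intro i; split_ifs <;> ring
    simp_rw [hsplit]
    rw [Finset.prod_mul_distrib, prod_sign, Finset.prod_const, Finset.card_univ,
      Fintype.card_fin, (heven v v.2).neg_one_pow, one_mul]
  simp_rw [h2]
  rw [Finset.sum_const, nsmul_eq_mul, Finset.card_univ, mul_comm]

/-- Lemma 2: if `C` is an even linear `[n,k]` code over F₄, then the number of
even-weight vectors in the dual code `C^⊥` equals `½(4^{n-k} + (-2)^n)`. -/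
theorem num_even_in_dual (n k : ℕ)
    (C : Submodule F₄ (Fin n → F₄))
    (heven : ∀ v ∈ C, Even (wt v))
    (hdim : Module.finrank F₄ C = k) :
    (2 : ℤ) * ({w ∈ dualSet C | Even (wt w)}.ncard : ℤ) = 4 ^ (n - k) + (-2) ^ n := by
  haveI : Fintype C := Fintype.ofFinite _
  set T := Finset.univ.filter (· ∈ dualSet C) with hT
  set S : ℤ := ∑ w ∈ T, (-1:ℤ) ^ wt w with hSdef
  have hcardC : (Fintype.card C : ℤ) = 4 ^ k := by
    have h := Module.card_eq_pow_finrank (K := F₄) (V := C)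
    rw [F4_card, hdim] at h
    exact_mod_cast h
  have hkn : k ≤ n := by
    rw [← hdim]
    have h := Submodule.finrank_le C
    rwa [Module.finrank_fin_fun] at h
  have hT4 : (T.card : ℤ) = 4 ^ (n - k) := by
    have h := card_dual_eq C
    rw [hcardC, show (4:ℤ)^n = 4^k * 4^(n-k) from by rw [← pow_add, Nat.add_sub_cancel' hkn]] at h
    exact mul_left_cancel₀ (by positivity) h
  have hS : S = (-2) ^ n := by
    have h := sum_sign_dual C heven
    rw [hcardC] at h
    exact mul_left_cancel₀ (by positivity) h
  have hset : {w ∈ dualSet C | Even (wt w)} = ↑(T.filter fun w => Even (wt w)) := by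
    ext w
    simp [hT]
  rw [hset, Set.ncard_coe_finset]
  have hsum : ∑ w ∈ T, ((1:ℤ) + (-1) ^ wt w) = (T.card : ℤ) + S := by
    rw [Finset.sum_add_distrib, Finset.sum_const, nsmul_eq_mul, mul_one]
  have hsum2 : ∑ w ∈ T, ((1:ℤ) + (-1) ^ wt w)
      = 2 * ((T.filter fun w => Even (wt w)).card : ℤ) := by
    rw [Finset.sum_congr rfl (fun w _ => show (1:ℤ) + (-1) ^ wt w
        = if Even (wt w) then 2 else 0 from by
      by_cases h : Even (wt w)
      · rw [if_pos h, h.neg_one_pow]; ring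
      · rw [if_neg h, (Nat.not_even_iff_odd.mp h).neg_one_pow]; ring)]
    rw [Finset.sum_ite, Finset.sum_const_zero, add_zero, Finset.sum_const,
      nsmul_eq_mul, mul_comm]
  rw [hsum2.symm.trans hsum, hT4, hS]
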